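/- (Strict monotonicity of the minimal time in the control bound; Step 1 of Proposition 3.2) Let M > 0, τ ≥ 0, and suppose ε₀ ∈ (0, M) is such that ‖S τ̃ y₀ + P u‖ > r for every τ̃ ∈ [max{0, τ−ε₀}, τ+ε₀] and every u ∈ H with ‖u‖ ≤ M + ε₀. Then for every τ̃ ∈ [max{0, τ−ε₀}, τ+ε₀] and all M₁, M₂ with M − ε₀ < M₁ < M₂ < M + ε₀, one has t*(M₂, τ̃) < t*(M₁, τ̃). -/

import Mathlib

set_option maxHeartbeats 1000000
open RealInnerProductSpace Filter

lemma weak_cluster13 {H : Type*} [NormedAddCommGroup H] [InnerProductSpace ℝ H] [CompleteSpace H]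
    (u : ℕ → H) (C : ℝ) (hC : ∀ n, ‖u n‖ ≤ C) :
    ∃ (v : H) (U : Ultrafilter ℕ), (U : Filter ℕ) ≤ atTop ∧ ‖v‖ ≤ C ∧
      ∀ w : H, Tendsto (fun n => (⟪u n, w⟫ : ℝ)) U (nhds ⟪v, w⟫) := by
  have hC0 : 0 ≤ C := (norm_nonneg _).trans (hC 0)
  set U : Ultrafilter ℕ := Ultrafilter.of atTop with hUdef
  have hUle : (U : Filter ℕ) ≤ atTop := Ultrafilter.of_le atTop
  have hbd : ∀ (w : H) (n : ℕ), |(⟪u n, w⟫ : ℝ)| ≤ C * ‖w‖ := by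
    intro w n
    calc |(⟪u n, w⟫ : ℝ)| ≤ ‖u n‖ * ‖w‖ := abs_real_inner_le_norm _ _
    _ ≤ C * ‖w‖ := by gcongr; exact hC n
  have hex : ∀ w : H, ∃ a : ℝ, Tendsto (fun n => (⟪u n, w⟫ : ℝ)) U (nhds a) := by
    intro w
    have hmem : ∀ n, (⟪u n, w⟫ : ℝ) ∈ Set.Icc (-(C * ‖w‖)) (C * ‖w‖) := by
      intro n; exact abs_le.1 (hbd w n)
    obtain ⟨a, -, ha⟩ := (isCompact_Icc (a := -(C * ‖w‖)) (b := C * ‖w‖)).ultrafilter_le_nhds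
      (U.map (fun n => (⟪u n, w⟫ : ℝ)))
      (by rw [Ultrafilter.coe_map]; exact tendsto_principal.2 (Filter.Eventually.of_forall hmem))
    exact ⟨a, ha⟩
  choose φ hφ using hex
  have hadd : ∀ w w', φ (w + w') = φ w + φ w' := by
    intro w w'
    refine tendsto_nhds_unique ?_ ((hφ w).add (hφ w'))
    simpa [inner_add_right] using hφ (w + w')
  have hsmul : ∀ (c : ℝ) w, φ (c • w) = c * φ w := by
    intro c w
    refine tendsto_nhds_unique ?_ ((hφ w).const_mul c)
    simpa [inner_smul_right] using hφ (c • w)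
  have hφbd : ∀ w, |φ w| ≤ C * ‖w‖ := by
    intro w
    exact le_of_tendsto ((hφ w).abs) (Filter.Eventually.of_forall fun n => hbd w n)
  let L : H →ₗ[ℝ] ℝ :=
    { toFun := φ
      map_add' := hadd
      map_smul' := fun c w => by simpa using hsmul c w }
  let Lc : H →L[ℝ] ℝ := L.mkContinuous C (fun w => by rw [Real.norm_eq_abs]; exact hφbd w)
  refine ⟨(InnerProductSpace.toDual ℝ H).symm Lc, U, hUle, ?_, ?_⟩
  · have hv : ∀ w, (⟪(InnerProductSpace.toDual ℝ H).symm Lc, w⟫ : ℝ) = φ w := fun w =>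
      InnerProductSpace.toDual_symm_apply
    set v := (InnerProductSpace.toDual ℝ H).symm Lc
    have h1 : ‖v‖ ^ 2 ≤ C * ‖v‖ := by
      rw [← real_inner_self_eq_norm_sq, real_inner_comm, hv v]
      exact (le_abs_self _).trans (hφbd v)
    rcases eq_or_lt_of_le (norm_nonneg v) with h0 | h0
    · simpa [← h0] using hC0
    · have := h1; rw [pow_two] at this
      exact le_of_mul_le_mul_right (by linarith) h0
  · intro w
    have hv : (⟪(InnerProductSpace.toDual ℝ H).symm Lc, w⟫ : ℝ) = φ w :=
      InnerProductSpace.toDual_symm_apply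
    rw [hv]; exact hφ w

theorem stmt_13
    {H : Type*} [NormedAddCommGroup H] [InnerProductSpace ℝ H] [CompleteSpace H]
    (lam : ℝ) (hlam : 0 < lam)
    (S : ℝ → H →L[ℝ] H)
    (hS0 : S 0 = ContinuousLinearMap.id ℝ H)
    (hSadd : ∀ s t : ℝ, 0 ≤ s → 0 ≤ t → S (s + t) = (S s).comp (S t))
    (hSsa : ∀ t : ℝ, 0 ≤ t → ∀ x z : H, ⟪S t x, z⟫ = ⟪x, S t z⟫)
    (hScont : ∀ y : H, ContinuousOn (fun t => S t y) (Set.Ici (0 : ℝ)))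
    (hSdecay : ∀ t : ℝ, 0 ≤ t → ∀ y : H, ‖S t y‖ ≤ Real.exp (-(lam * t)) * ‖y‖)
    (P : H →L[ℝ] H)
    (hPsa : ∀ x z : H, ⟪P x, z⟫ = ⟪x, P z⟫)
    (hPnorm : ∀ u : H, ‖P u‖ ≤ ‖u‖)
    (y₀ : H) (r : ℝ) (hr : 0 < r)
    (tS : ℝ → ℝ → ℝ)
    (htS : ∀ M τ : ℝ, tS M τ =
      sInf {T : ℝ | τ ≤ T ∧ ∃ u : H, ‖u‖ ≤ M ∧ ‖S T y₀ + S (T - τ) (P u)‖ ≤ r})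
    (hUC : ∀ φ : H, φ ≠ 0 → ∀ t : ℝ, 0 < t → P (S t φ) ≠ 0)
    (M τ ε₀ : ℝ) (hM : 0 < M) (hτ : 0 ≤ τ) (hε₀ : 0 < ε₀) (hε₀M : ε₀ < M)
    (hrob : ∀ τ' : ℝ, max 0 (τ - ε₀) ≤ τ' → τ' ≤ τ + ε₀ →
      ∀ u : H, ‖u‖ ≤ M + ε₀ → r < ‖S τ' y₀ + P u‖) :
    ∀ τ' : ℝ, max 0 (τ - ε₀) ≤ τ' → τ' ≤ τ + ε₀ →
      ∀ M₁ M₂ : ℝ, M - ε₀ < M₁ → M₁ < M₂ → M₂ < M + ε₀ →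
        tS M₂ τ' < tS M₁ τ' := by
  intro τ' hτ'1 hτ'2 M₁ M₂ hM₁ h12 hM₂
  have hτ'0 : (0 : ℝ) ≤ τ' := le_trans (le_max_left 0 _) hτ'1
  have hM₁0 : 0 < M₁ := by linarith
  set Adm : ℝ → Set ℝ := fun M' =>
    {T : ℝ | τ' ≤ T ∧ ∃ u : H, ‖u‖ ≤ M' ∧ ‖S T y₀ + S (T - τ') (P u)‖ ≤ r} with hAdm
  -- basic facts
  have hbdd : ∀ M', BddBelow (Adm M') := fun M' => ⟨τ', fun T hT => hT.1⟩
  have hne : ∀ M' : ℝ, 0 ≤ M' → (Adm M').Nonempty := by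
    intro M' hM'
    have h1 : Tendsto (fun T : ℝ => Real.exp (-(lam * T)) * ‖y₀‖) atTop (nhds 0) := by
      have : Tendsto (fun T : ℝ => lam * T) atTop atTop :=
        Filter.Tendsto.const_mul_atTop hlam tendsto_id
      simpa using (Real.tendsto_exp_neg_atTop_nhds_zero.comp this).mul_const ‖y₀‖
    have h2 : ∀ᶠ T in atTop, Real.exp (-(lam * T)) * ‖y₀‖ < r :=
      h1.eventually_lt_const hr
    obtain ⟨T, hT1, hT2⟩ := ((eventually_ge_atTop τ').and h2).exists
    refine ⟨T, hT1, 0, by simpa using hM', ?_⟩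
    have hT0 : 0 ≤ T := hτ'0.trans hT1
    simp only [map_zero, add_zero]
    exact (hSdecay T hT0 y₀).trans hT2.le
  -- a helper for strong continuity along sequences
  have hlim : ∀ (y : H) (a : ℝ) (g : ℕ → ℝ), 0 ≤ a → (∀ n, 0 ≤ g n) →
      Tendsto g atTop (nhds a) → Tendsto (fun n => S (g n) y) atTop (nhds (S a y)) := by
    intro y a g ha hg hga
    have hc : ContinuousWithinAt (fun t => S t y) (Set.Ici (0:ℝ)) a := hScont y a ha
    exact hc.tendsto.comp (tendsto_nhdsWithin_iff.2 ⟨hga, Filter.Eventually.of_forall hg⟩)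
  rw [htS M₁ τ', htS M₂ τ']
  set T₁ := sInf (Adm M₁) with hT₁def
  have hT₁τ : τ' ≤ T₁ := le_csInf (hne M₁ hM₁0.le) fun T hT => hT.1
  have hT₁0 : (0:ℝ) ≤ T₁ := hτ'0.trans hT₁τ
  obtain ⟨Tn, -, hTtend, hTmem⟩ := exists_seq_tendsto_sInf (hne M₁ hM₁0.le) (hbdd M₁)
  choose un hun hzn using fun n => (hTmem n).2
  have hTge : ∀ n, τ' ≤ Tn n := fun n => (hTmem n).1
  have hTge0 : ∀ n, (0:ℝ) ≤ Tn n := fun n => hτ'0.trans (hTge n)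
  obtain ⟨v, U, hUle, hvnorm, hvtend⟩ := weak_cluster13 un M₁ hun
  set s₁ := T₁ - τ' with hs₁def
  have hs₁0 : 0 ≤ s₁ := by simp [hs₁def]; linarith
  set z := S T₁ y₀ + S s₁ (P v) with hzdef
  -- key weak limit
  have hkey : ∀ w : H, Tendsto
      (fun n => (⟪S (Tn n) y₀ + S (Tn n - τ') (P (un n)), w⟫ : ℝ)) U (nhds ⟪z, w⟫) := by
    intro w
    have hsn0 : ∀ n, (0:ℝ) ≤ Tn n - τ' := fun n => by linarith [hTge n]
    have hsntend : Tendsto (fun n => Tn n - τ') atTop (nhds s₁) := hTtend.sub_const τ'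
    have e1 : ∀ n, (⟪S (Tn n) y₀ + S (Tn n - τ') (P (un n)), w⟫ : ℝ)
        = ⟪S (Tn n) y₀, w⟫ + ⟪un n, P (S (Tn n - τ') w)⟫ := by
      intro n
      rw [inner_add_left, hSsa _ (hsn0 n), hPsa]
    have l1 : Tendsto (fun n => (⟪S (Tn n) y₀, w⟫ : ℝ)) atTop (nhds ⟪S T₁ y₀, w⟫) := by
      have := hlim y₀ T₁ Tn hT₁0 hTge0 hTtend
      exact (Continuous.tendsto (continuous_inner.comp
        (continuous_id.prodMk continuous_const)) _).comp this |>.congr (fun n => rfl)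
    have l2a : Tendsto (fun n => (⟪un n, P (S (Tn n - τ') w)⟫
        - ⟪un n, P (S s₁ w)⟫ : ℝ)) atTop (nhds 0) := by
      have hps : Tendsto (fun n => P (S (Tn n - τ') w)) atTop (nhds (P (S s₁ w))) :=
        (P.continuous.tendsto _).comp (hlim w s₁ _ hs₁0 hsn0 hsntend)
      have hps0 : Tendsto (fun n => ‖P (S (Tn n - τ') w) - P (S s₁ w)‖) atTop (nhds 0) := by
        have h2 : Tendsto (fun n => P (S (Tn n - τ') w) - P (S s₁ w)) atTop
            (nhds (P (S s₁ w) - P (S s₁ w))) := hps.sub tendsto_const_nhds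
        simpa using h2.norm
      rw [tendsto_zero_iff_norm_tendsto_zero]
      refine squeeze_zero (fun n => norm_nonneg _)
        (fun n => ?_) (by simpa using hps0.const_mul M₁)
      have : (⟪un n, P (S (Tn n - τ') w)⟫ - ⟪un n, P (S s₁ w)⟫ : ℝ)
          = ⟪un n, P (S (Tn n - τ') w) - P (S s₁ w)⟫ := by rw [inner_sub_right]
      rw [Real.norm_eq_abs, this]
      calc |(⟪un n, P (S (Tn n - τ') w) - P (S s₁ w)⟫ : ℝ)|
          ≤ ‖un n‖ * ‖P (S (Tn n - τ') w) - P (S s₁ w)‖ := abs_real_inner_le_norm _ _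
        _ ≤ M₁ * ‖P (S (Tn n - τ') w) - P (S s₁ w)‖ := by gcongr; exact hun n
    have l2 : Tendsto (fun n => (⟪un n, P (S (Tn n - τ') w)⟫ : ℝ)) U
        (nhds ⟪v, P (S s₁ w)⟫) := by
      have := (hvtend (P (S s₁ w))).add (l2a.mono_left hUle)
      simpa using this
    have : Tendsto (fun n => (⟪S (Tn n) y₀, w⟫ + ⟪un n, P (S (Tn n - τ') w)⟫ : ℝ)) U
        (nhds (⟪S T₁ y₀, w⟫ + ⟪v, P (S s₁ w)⟫)) := (l1.mono_left hUle).add l2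
    have e2 : (⟪S T₁ y₀, w⟫ + ⟪v, P (S s₁ w)⟫ : ℝ) = ⟪z, w⟫ := by
      rw [hzdef, inner_add_left, hSsa _ hs₁0, hPsa]
    rw [← e2]
    exact this.congr fun n => (e1 n).symm
  -- ‖z‖ ≤ r
  have hzr : ‖z‖ ≤ r := by
    have hzw : ∀ w : H, (⟪z, w⟫ : ℝ) ≤ r * ‖w‖ := by
      intro w
      refine le_of_tendsto (hkey w) (Filter.Eventually.of_forall fun n => ?_)
      calc (⟪S (Tn n) y₀ + S (Tn n - τ') (P (un n)), w⟫ : ℝ)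
          ≤ ‖S (Tn n) y₀ + S (Tn n - τ') (P (un n))‖ * ‖w‖ := real_inner_le_norm _ _
        _ ≤ r * ‖w‖ := by gcongr; exact hzn n
    have h1 : ‖z‖ ^ 2 ≤ r * ‖z‖ := by
      rw [← real_inner_self_eq_norm_sq]; exact hzw z
    rcases eq_or_lt_of_le (norm_nonneg z) with h0 | h0
    · linarith [h0.symm]
    · rw [pow_two] at h1; exact le_of_mul_le_mul_right (by linarith) h0
  have hvM : ‖v‖ ≤ M + ε₀ := hvnorm.trans (by linarith)
  -- τ' < T₁
  have hT₁gt : τ' < T₁ := by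
    rcases lt_or_eq_of_le hT₁τ with h | h
    · exact h
    · exfalso
      have hs₁ : s₁ = 0 := by rw [hs₁def, ← h]; ring
      have : z = S τ' y₀ + P v := by
        rw [hzdef, hs₁, hS0, ← h]; rfl
      have hcontr := hrob τ' hτ'1 hτ'2 v hvM
      rw [this] at hzr
      linarith
  -- construct a strictly better control
  have hs₁pos : 0 < s₁ := by rw [hs₁def]; linarith
  have hgood : ∃ u' : H, ‖u'‖ ≤ M₂ ∧ ‖S T₁ y₀ + S s₁ (P u')‖ < r := by
    by_cases hz0 : z = 0
    · refine ⟨v, hvnorm.trans h12.le, ?_⟩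
      have hzz : S T₁ y₀ + S s₁ (P v) = z := hzdef.symm
      rw [hzz, hz0]; simpa using hr
    · set q := P (S s₁ z) with hqdef
      have hq : q ≠ 0 := hUC z hz0 s₁ hs₁pos
      set c := ‖q‖ with hcdef
      have hc : 0 < c := norm_pos_iff.2 hq
      set b := ‖S s₁ (P q)‖ with hbdef
      have hb : 0 ≤ b := norm_nonneg _
      set t := min (c^2/(b^2+1)) ((M₂ - M₁)/(c+1)) with htdef
      have ht : 0 < t := lt_min (by positivity) (by apply div_pos <;> [linarith; positivity])
      have htle1 : t ≤ c^2/(b^2+1) := min_le_left _ _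
      have htle2 : t ≤ (M₂ - M₁)/(c+1) := min_le_right _ _
      clear_value t
      refine ⟨v - t • q, ?_, ?_⟩
      · have h1 : ‖v - t • q‖ ≤ ‖v‖ + t * c := by
          calc ‖v - t • q‖ ≤ ‖v‖ + ‖t • q‖ := norm_sub_le _ _
            _ = ‖v‖ + t * c := by rw [norm_smul, Real.norm_eq_abs, abs_of_pos ht]
        have h2 : t * c ≤ ((M₂ - M₁)/(c+1)) * c := by gcongr
        have h3 : ((M₂ - M₁)/(c+1)) * c < M₂ - M₁ := by
          rw [div_mul_eq_mul_div, div_lt_iff₀ (by positivity)]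
          nlinarith
        linarith [hvnorm]
      · have hst : S T₁ y₀ + S s₁ (P (v - t • q)) = z - t • S s₁ (P q) := by
          rw [hzdef]; simp only [map_sub, map_smul]; abel
        have hip : (⟪z, S s₁ (P q)⟫ : ℝ) = c^2 := by
          rw [real_inner_comm, hSsa _ hs₁0, hPsa, ← hqdef, real_inner_self_eq_norm_sq]
        have hnorm2 : ‖z - t • S s₁ (P q)‖^2 = ‖z‖^2 - 2*t*c^2 + t^2*b^2 := by
          rw [norm_sub_sq_real, inner_smul_right, hip, norm_smul, Real.norm_eq_abs,
            abs_of_pos ht, mul_pow]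
          ring
        have htb : t*b^2 < c^2 := by
          have h2 : t*(b^2+1) ≤ c^2 := by
            rw [← le_div_iff₀ (by positivity : (0:ℝ) < b^2+1)]; exact htle1
          nlinarith
        have hz2 : ‖z‖^2 ≤ r^2 := by nlinarith [norm_nonneg z]
        have hfin : ‖z - t • S s₁ (P q)‖^2 < r^2 := by
          rw [hnorm2]; nlinarith
        rw [hst]
        exact lt_of_pow_lt_pow_left₀ 2 hr.le hfin
  obtain ⟨u', hu'M, hu'r⟩ := hgood
  -- continuity gives an earlier admissible time for M₂
  have hcont : ContinuousWithinAt (fun T => ‖S T y₀ + S (T - τ') (P u')‖)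
      (Set.Ici τ') T₁ := by
    have h1 : ContinuousWithinAt (fun T => S T y₀) (Set.Ici τ') T₁ :=
      ((hScont y₀) T₁ hT₁0).mono (Set.Ici_subset_Ici.2 hτ'0)
    have h2 : ContinuousWithinAt (fun T => S (T - τ') (P u')) (Set.Ici τ') T₁ := by
      have hsub : ContinuousWithinAt (fun T : ℝ => T - τ') (Set.Ici τ') T₁ :=
        (continuous_id.sub continuous_const).continuousWithinAt
      have hmaps : Set.MapsTo (fun T : ℝ => T - τ') (Set.Ici τ') (Set.Ici (0:ℝ)) := by
        intro T hT
        simp only [Set.mem_Ici] at *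
        linarith
      exact ContinuousWithinAt.comp (g := fun t => S t (P u')) (f := fun T => T - τ')
        ((hScont (P u')) (T₁ - τ') hs₁0) hsub hmaps
    exact (h1.add h2).norm
  have hval : ‖S T₁ y₀ + S (T₁ - τ') (P u')‖ < r := by rw [← hs₁def]; exact hu'r
  have hev : ∀ᶠ T in nhdsWithin T₁ (Set.Ici τ'), ‖S T y₀ + S (T - τ') (P u')‖ < r :=
    hcont.eventually_lt_const hval
  rw [Filter.eventually_iff, Metric.mem_nhdsWithin_iff] at hev
  obtain ⟨ε, hε, hball⟩ := hev
  set T := max ((τ'+T₁)/2) (T₁ - ε/2) with hTdef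
  have hT1 : τ' < T := lt_of_lt_of_le (by linarith) (le_max_left _ _)
  have hT2 : T < T₁ := max_lt (by linarith) (by linarith)
  have hTball : T ∈ Metric.ball T₁ ε := by
    have h4 : T₁ - ε/2 ≤ T := le_max_right _ _
    rw [Metric.mem_ball, Real.dist_eq, abs_sub_comm, abs_of_nonneg (by linarith)]
    linarith
  have hTadm : T ∈ Adm M₂ := ⟨hT1.le, u', hu'M, (hball ⟨hTball, hT1.le⟩).le⟩
  exact lt_of_le_of_lt (csInf_le (hbdd M₂) hTadm) hT2
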